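/- Let L be a Lie algebra over a field F and let e₁, e₂, e₃, e₄ ∈ L be elements that are linearly independent modulo Z(L) and satisfy L = Z(L) + span{e₁, e₂, e₃, e₄}. Suppose ⁅e₁,e₄⁆ = ⁅e₂,e₃⁆ = 0, ⁅e₂,e₄⁆ = ⁅e₁,e₃⁆, and ⁅e₃,e₄⁆ = β⁅e₁,e₂⁆ + γ⁅e₁,e₃⁆ for some β, γ ∈ F; suppose further that ⁅e₁,e₂⁆ and ⁅e₁,e₃⁆ are linearly independent over F and that the polynomial x² + γx − β has no root in F. Then the commuting graph Γ(L) is disconnected. -/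

import Mathlib

/-- The commuting graph of a Lie algebra `L` over `F`: vertices are the elements of
`L` outside the center, and two distinct vertices are adjacent iff they commute. -/
def commutingGraph (F : Type*) [CommRing F] (L : Type*) [LieRing L] [LieAlgebra F L] :
    SimpleGraph {x : L // x ∉ LieAlgebra.center F L} where
  Adj x y := x ≠ y ∧ ⁅(x : L), (y : L)⁆ = 0
  symm := ⟨fun x y h => ⟨h.1.symm, by rw [← lie_skew, h.2, neg_zero]⟩⟩
  loopless := ⟨fun x h => h.1 rfl⟩

/-- The fundamental bracket computation: the bracket of two elements expressed in
coordinates relative to `e₁, e₂, e₃, e₄` (up to central summands). -/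
theorem stmt16_bracket (F : Type*) [Field F] (L : Type*) [LieRing L] [LieAlgebra F L]
    (e₁ e₂ e₃ e₄ : L) (β γ : F)
    (h14 : ⁅e₁, e₄⁆ = 0) (h23 : ⁅e₂, e₃⁆ = 0) (h24 : ⁅e₂, e₄⁆ = ⁅e₁, e₃⁆)
    (h34 : ⁅e₃, e₄⁆ = β • ⁅e₁, e₂⁆ + γ • ⁅e₁, e₃⁆)
    (z w : L) (hz : ∀ m : L, ⁅z, m⁆ = 0) (hw : ∀ m : L, ⁅m, w⁆ = 0)
    (x1 x2 x3 x4 y1 y2 y3 y4 : F) :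
    ⁅z + x1•e₁+x2•e₂+x3•e₃+x4•e₄, w + y1•e₁+y2•e₂+y3•e₃+y4•e₄⁆ =
      (x1*y2 - x2*y1 + β*(x3*y4 - x4*y3)) • ⁅e₁,e₂⁆ +
      (x1*y3 - x3*y1 + x2*y4 - x4*y2 + γ*(x3*y4 - x4*y3)) • ⁅e₁,e₃⁆ := by
  have h21 : ⁅e₂,e₁⁆ = -⁅e₁,e₂⁆ := by rw [← lie_skew]
  have h31 : ⁅e₃,e₁⁆ = -⁅e₁,e₃⁆ := by rw [← lie_skew]
  have h41 : ⁅e₄,e₁⁆ = 0 := by rw [← lie_skew, h14, neg_zero]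
  have h32 : ⁅e₃,e₂⁆ = 0 := by rw [← lie_skew, h23, neg_zero]
  have h42 : ⁅e₄,e₂⁆ = -⁅e₁,e₃⁆ := by rw [← lie_skew, h24]
  have h43 : ⁅e₄,e₃⁆ = -(β • ⁅e₁, e₂⁆ + γ • ⁅e₁, e₃⁆) := by rw [← lie_skew, h34]
  simp only [add_lie, lie_add, smul_lie, lie_smul, hz, hw, lie_self,
    h14, h23, h24, h34, h21, h31, h41, h32, h42, h43, smul_zero, zero_add, add_zero,
    smul_neg, smul_add, smul_smul]
  module

/-- let `e₁, e₂, e₃, e₄ ∈ L` be linearly independent modulo the center with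
`L = Z(L) + span {e₁, e₂, e₃, e₄}`, `⁅e₁,e₄⁆ = ⁅e₂,e₃⁆ = 0`, `⁅e₂,e₄⁆ = ⁅e₁,e₃⁆`,
`⁅e₃,e₄⁆ = β⁅e₁,e₂⁆ + γ⁅e₁,e₃⁆` with `⁅e₁,e₂⁆, ⁅e₁,e₃⁆` linearly independent, and
suppose `x² + γx - β` has no root in `F`. Then the commuting graph of `L` is disconnected. -/
theorem stmt16 (F : Type*) [Field F] (L : Type*) [LieRing L] [LieAlgebra F L]
    (e₁ e₂ e₃ e₄ : L) (β γ : F)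
    (hli : LinearIndependent F fun i =>
      (Submodule.Quotient.mk (![e₁, e₂, e₃, e₄] i) :
        L ⧸ (LieAlgebra.center F L).toSubmodule))
    (hspan : (LieAlgebra.center F L).toSubmodule ⊔
      Submodule.span F {e₁, e₂, e₃, e₄} = ⊤)
    (h14 : ⁅e₁, e₄⁆ = 0) (h23 : ⁅e₂, e₃⁆ = 0) (h24 : ⁅e₂, e₄⁆ = ⁅e₁, e₃⁆)
    (h34 : ⁅e₃, e₄⁆ = β • ⁅e₁, e₂⁆ + γ • ⁅e₁, e₃⁆)
    (hbr : LinearIndependent F ![⁅e₁, e₂⁆, ⁅e₁, e₃⁆])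
    (hroot : ∀ ζ : F, ζ ^ 2 + γ * ζ - β ≠ 0) :
    ¬ (commutingGraph F L).Connected := by
  intro hconn
  -- membership in the center
  have memZ : ∀ x : L, x ∈ LieAlgebra.center F L ↔ ∀ m : L, ⁅m, x⁆ = 0 := fun x =>
    LieModule.mem_maxTrivSubmodule F L L x
  have memZ' : ∀ x : L, x ∈ LieAlgebra.center F L → ∀ m : L, ⁅x, m⁆ = 0 := by
    intro x hx m
    rw [← lie_skew, (memZ x).mp hx m, neg_zero]
  -- a pair-independence consequence
  have pair : ∀ p q : F, p • ⁅e₁,e₂⁆ + q • ⁅e₁,e₃⁆ = 0 → p = 0 ∧ q = 0 :=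
    fun p q h => hbr.eq_zero_of_pair h
  have ha : (⁅e₁,e₂⁆ : L) ≠ 0 := by
    intro h
    exact one_ne_zero ((pair 1 0 (by simp [h])).1)
  -- coordinates
  have coords : ∀ x : L, ∃ z : L, (∀ m : L, ⁅z, m⁆ = 0) ∧
      ∃ x1 x2 x3 x4 : F, x = z + x1•e₁+x2•e₂+x3•e₃+x4•e₄ := by
    intro x
    have hx : x ∈ (LieAlgebra.center F L).toSubmodule ⊔
        Submodule.span F {e₁, e₂, e₃, e₄} := by rw [hspan]; trivial
    obtain ⟨z, hz, s, hs, hzs⟩ := Submodule.mem_sup.mp hx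
    rw [Submodule.mem_span_insert] at hs
    obtain ⟨x1, s1, hs1, rfl⟩ := hs
    rw [Submodule.mem_span_insert] at hs1
    obtain ⟨x2, s2, hs2, rfl⟩ := hs1
    rw [Submodule.mem_span_insert] at hs2
    obtain ⟨x3, s3, hs3, rfl⟩ := hs2
    rw [Submodule.mem_span_singleton] at hs3
    obtain ⟨x4, rfl⟩ := hs3
    exact ⟨z, memZ' z hz, x1, x2, x3, x4, by rw [← hzs]; abel⟩
  have he1 : (e₁ : L) = 0 + (1:F)•e₁+(0:F)•e₂+(0:F)•e₃+(0:F)•e₄ := by simp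
  have h0 : ∀ m : L, ⁅m, (0:L)⁆ = 0 := fun m => lie_zero m
  -- key closure step: commuting with e₁ propagates along edges
  have step : ∀ x y : {x : L // x ∉ LieAlgebra.center F L}, ⁅(x:L),(y:L)⁆ = 0 →
      ⁅(x:L),e₁⁆ = 0 → ⁅(y:L),e₁⁆ = 0 := by
    rintro ⟨x, hxc⟩ ⟨y, hyc⟩ hxy hxe
    simp only at hxy hxe ⊢
    obtain ⟨z, hz, x1, x2, x3, x4, rfl⟩ := coords x
    obtain ⟨w, hw, y1, y2, y3, y4, rfl⟩ := coords y
    have hw' : ∀ m : L, ⁅m, w⁆ = 0 := fun m => by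
      rw [← lie_skew, hw m, neg_zero]
    -- bracket with e₁ gives x2 = x3 = 0
    have bx := stmt16_bracket F L e₁ e₂ e₃ e₄ β γ h14 h23 h24 h34 z 0 hz h0
        x1 x2 x3 x4 1 0 0 0
    rw [← he1, hxe] at bx
    obtain ⟨hx2a, hx3a⟩ := pair _ _ bx.symm
    have hx2 : x2 = 0 := by linear_combination -hx2a
    have hx3 : x3 = 0 := by linear_combination -hx3a
    -- x noncentral gives (x1, x4) ≠ 0
    have hx14 : ¬ (x1 = 0 ∧ x4 = 0) := by
      rintro ⟨h1, h4⟩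
      apply hxc
      rw [h1, h4, hx2, hx3]
      simp only [zero_smul, add_zero]
      exact (memZ z).mpr (fun m => by rw [← lie_skew, hz m, neg_zero])
    -- the determinant is nonzero
    set d : F := x1^2 - γ*x1*x4 - β*x4^2 with hd
    have hdne : d ≠ 0 := by
      rcases eq_or_ne x4 0 with h4 | h4
      · have h1 : x1 ≠ 0 := fun h1 => hx14 ⟨h1, h4⟩
        rw [hd, h4]
        simpa using pow_ne_zero 2 h1
      · intro h
        rw [hd] at h
        apply hroot (-x1/x4)
        have key : (-x1/x4) ^ 2 + γ * (-x1/x4) - β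
            = (x1 ^ 2 - γ * x1 * x4 - β * x4 ^ 2) / x4 ^ 2 := by
          field_simp
          ring
        rw [key, h, zero_div]
    -- bracket of x and y gives the two equations
    have bxy := stmt16_bracket F L e₁ e₂ e₃ e₄ β γ h14 h23 h24 h34 z w hz hw'
        x1 x2 x3 x4 y1 y2 y3 y4
    rw [hxy] at bxy
    obtain ⟨hP, hQ⟩ := pair _ _ bxy.symm
    rw [hx2, hx3] at hP hQ
    -- solve for y2, y3
    have hy2 : y2 = 0 := by
      have h2 : d * y2 = 0 := by linear_combination (x1 - γ*x4) * hP + (β*x4) * hQ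
      exact (mul_eq_zero.mp h2).resolve_left hdne
    have hy3 : y3 = 0 := by
      have h3 : d * y3 = 0 := by linear_combination x4 * hP + x1 * hQ
      exact (mul_eq_zero.mp h3).resolve_left hdne
    -- conclude
    have by1 := stmt16_bracket F L e₁ e₂ e₃ e₄ β γ h14 h23 h24 h34 w 0
        hw h0 y1 y2 y3 y4 1 0 0 0
    rw [← he1] at by1
    rw [by1, hy2, hy3]
    simp
  -- e₁ and e₂ are not central
  have he1c : e₁ ∉ LieAlgebra.center F L := by
    intro h
    exact ha (memZ' e₁ h e₂)
  have he2c : e₂ ∉ LieAlgebra.center F L := by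
    intro h
    exact ha ((memZ e₂).mp h e₁)
  -- walk invariant
  have walkinv : ∀ (u v : {x : L // x ∉ LieAlgebra.center F L})
      (p : (commutingGraph F L).Walk u v), ⁅(u:L), e₁⁆ = 0 → ⁅(v:L), e₁⁆ = 0 := by
    intro u v p
    induction p with
    | nil => exact id
    | cons h q ih =>
      intro hu
      exact ih (step _ _ h.2 hu)
  obtain ⟨p⟩ := hconn.preconnected ⟨e₁, he1c⟩ ⟨e₂, he2c⟩
  have hfin := walkinv _ _ p (lie_self e₁)
  simp only at hfin
  apply ha
  rw [← lie_skew, hfin, neg_zero]
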